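/- The function h(γ) := 1 - 6γ + √((1-6γ)² + γ(7+16γ)) - 4√(1-γ) is strictly increasing on [11/12, 1). -/

import Mathlib

theorem stmt_2 :
    StrictMonoOn
      (fun γ : ℝ => 1 - 6*γ + Real.sqrt ((1 - 6*γ)^2 + γ*(7 + 16*γ)) - 4 * Real.sqrt (1 - γ))
      (Set.Ico (11/12 : ℝ) 1) := by
  apply strictMonoOn_of_deriv_pos (convex_Ico _ _)
  · apply ContinuousOn.sub
    · apply ContinuousOn.add
      · fun_prop
      · exact (Real.continuous_sqrt.comp (by continuity)).continuousOn
    · exact (continuous_const.mul (Real.continuous_sqrt.comp (by continuity))).continuousOn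
  · intro x hx
    rw [interior_Ico] at hx
    obtain ⟨h1, h2⟩ := hx
    have hu : (0:ℝ) < (1 - 6*x)^2 + x*(7 + 16*x) := by nlinarith
    have h1x : (0:ℝ) < 1 - x := by linarith
    have hd1 : HasDerivAt (fun γ : ℝ => (1 - 6*γ)^2 + γ*(7 + 16*γ)) (104*x - 5) x := by
      have heq : (fun γ : ℝ => (1 - 6*γ)^2 + γ*(7 + 16*γ))
          = fun γ : ℝ => 52*γ^2 - 5*γ + 1 := by funext γ; ring
      rw [heq]
      have h := (((hasDerivAt_pow 2 x).const_mul (52:ℝ)).sub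
        ((hasDerivAt_id x).const_mul (5:ℝ))).add_const (1:ℝ)
      refine h.congr_deriv ?_
      norm_num; ring
    have hs1 : HasDerivAt (fun γ : ℝ => Real.sqrt ((1 - 6*γ)^2 + γ*(7 + 16*γ)))
        (1 / (2 * Real.sqrt ((1 - 6*x)^2 + x*(7 + 16*x))) * (104*x - 5)) x :=
      (Real.hasDerivAt_sqrt (ne_of_gt hu)).comp x hd1
    have hd2 : HasDerivAt (fun γ : ℝ => 1 - γ) (-1) x := by
      simpa using (hasDerivAt_id x).const_sub (1:ℝ)
    have hs2 : HasDerivAt (fun γ : ℝ => Real.sqrt (1 - γ))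
        (1 / (2 * Real.sqrt (1 - x)) * (-1)) x :=
      (Real.hasDerivAt_sqrt (ne_of_gt h1x)).comp x hd2
    have hA : HasDerivAt (fun γ : ℝ => 1 - 6*γ) (-6) x := by
      simpa using ((hasDerivAt_id x).const_mul (6:ℝ)).const_sub (1:ℝ)
    have hf : HasDerivAt
        (fun γ : ℝ => 1 - 6*γ + Real.sqrt ((1 - 6*γ)^2 + γ*(7 + 16*γ)) - 4 * Real.sqrt (1 - γ))
        (-6 + 1 / (2 * Real.sqrt ((1 - 6*x)^2 + x*(7 + 16*x))) * (104*x - 5)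
          - 4 * (1 / (2 * Real.sqrt (1 - x)) * (-1))) x :=
      (hA.add hs1).sub (hs2.const_mul 4)
    rw [hf.deriv]
    have hsu : 0 < Real.sqrt ((1 - 6*x)^2 + x*(7 + 16*x)) := Real.sqrt_pos.mpr hu
    have hsx : 0 < Real.sqrt (1 - x) := Real.sqrt_pos.mpr h1x
    have hsx3 : Real.sqrt (1 - x) < 1/3 := by
      rw [show (1/3 : ℝ) = Real.sqrt (1/9) by
        rw [show (1/9:ℝ) = (1/3)^2 by norm_num, Real.sqrt_sq (by norm_num)]]
      exact Real.sqrt_lt_sqrt (le_of_lt h1x) (by linarith)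
    have ht1 : 0 < 1 / (2 * Real.sqrt ((1 - 6*x)^2 + x*(7 + 16*x))) * (104*x - 5) := by
      apply mul_pos (by positivity) (by linarith)
    have ht2 : 6 < 4 * (1 / (2 * Real.sqrt (1 - x))) := by
      rw [mul_one_div, lt_div_iff₀ (by linarith)]
      linarith
    nlinarith [ht2]
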